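/- For every p ∈ {2, 3, 5} there exists a non-singular cubic form F ∈ ℤ[x_1,…,x_11] in 11 variables such that the hypersurface F = 0 does not contain a line over ℚ_p; that is, there do not exist linearly independent vectors x, y ∈ ℚ_p^11 with F(s•x + t•y) = 0 for all s, t ∈ ℚ_p. -/

import Mathlib

open MvPolynomial

namespace SmoothCubicNoLine

/-- The ternary cubic `S` (norm form of `x³+11x+1` plus `30·(cubes)`)
placed in variables `i j k` of `Fin 11`. -/
noncomputable def T (i j k : Fin 11) : MvPolynomial (Fin 11) ℤ :=
  C 31 * X i ^ 3 + C 29 * X j ^ 3 + C 31 * X k ^ 3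
  + C (-11) * (X j * X k ^ 2) + C 121 * (X i * X k ^ 2) + C 3 * (X i * X j * X k)
  + C 11 * (X i * X j ^ 2) + C (-22) * (X i ^ 2 * X k)

/-- The 11-variable cubic form. -/
noncomputable def FF (p : ℕ) : MvPolynomial (Fin 11) ℤ :=
  T 0 1 2 + C (p : ℤ) * T 3 4 5 + C ((p : ℤ) ^ 2) * T 6 7 8 + X 9 ^ 3 + X 10 ^ 3

/-- The evaluation of `S` as a plain function. -/
def phi {R : Type*} [CommRing R] (a b c : R) : R :=
  31 * a ^ 3 + 29 * b ^ 3 + 31 * c ^ 3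
  - 11 * (b * c ^ 2) + 121 * (a * c ^ 2) + 3 * (a * b * c)
  + 11 * (a * b ^ 2) - 22 * (a ^ 2 * c)

lemma T_isHomogeneous (i j k : Fin 11) : (T i j k).IsHomogeneous 3 := by
  have h3 : ∀ l : Fin 11, ((X l : MvPolynomial (Fin 11) ℤ) ^ 3).IsHomogeneous 3 :=
    fun l => isHomogeneous_X_pow l 3
  have hX : ∀ l : Fin 11, ((X l : MvPolynomial (Fin 11) ℤ)).IsHomogeneous 1 :=
    fun l => isHomogeneous_X _ l
  refine ((((((((h3 i).C_mul _).add ((h3 j).C_mul _)).add ((h3 k).C_mul _)).add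
    ?_).add ?_).add ?_).add ?_).add ?_
  · exact (((hX j).mul (isHomogeneous_X_pow k 2) : IsHomogeneous _ 3).C_mul _)
  · exact (((hX i).mul (isHomogeneous_X_pow k 2) : IsHomogeneous _ 3).C_mul _)
  · exact ((((hX i).mul (hX j)).mul (hX k) : IsHomogeneous _ 3).C_mul _)
  · exact (((hX i).mul (isHomogeneous_X_pow j 2) : IsHomogeneous _ 3).C_mul _)
  · exact (((isHomogeneous_X_pow i 2).mul (hX k) : IsHomogeneous _ 3).C_mul _)

lemma FF_isHomogeneous (p : ℕ) : (FF p).IsHomogeneous 3 :=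
  ((((T_isHomogeneous 0 1 2).add ((T_isHomogeneous 3 4 5).C_mul _)).add
    ((T_isHomogeneous 6 7 8).C_mul _)).add (isHomogeneous_X_pow 9 3)).add
    (isHomogeneous_X_pow 10 3)

lemma eval_T {R : Type*} [CommRing R] (v : Fin 11 → R) (i j k : Fin 11) :
    eval v ((T i j k).map (Int.castRingHom R)) = phi (v i) (v j) (v k) := by
  simp only [T, phi, map_add, map_mul, map_pow, MvPolynomial.map_C, map_X, eval_add,
    eval_mul, eval_pow, eval_C, eval_X, eq_intCast, map_ofNat, map_neg, map_natCast]
  ring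

lemma eval_FF {R : Type*} [CommRing R] (p : ℕ) (v : Fin 11 → R) :
    eval v ((FF p).map (Int.castRingHom R)) =
      phi (v 0) (v 1) (v 2) + (p : R) * phi (v 3) (v 4) (v 5)
        + (p : R) ^ 2 * phi (v 6) (v 7) (v 8) + v 9 ^ 3 + v 10 ^ 3 := by
  simp only [FF, map_add, map_mul, map_pow, MvPolynomial.map_C, map_X, eval_add, eval_mul,
    eval_pow, eval_C, eval_X, eval_T, eq_intCast, map_ofNat, map_neg, map_natCast]


set_option maxHeartbeats 2000000 in
lemma FF_smooth (p : ℕ) (hp0 : (p:ℂ) ≠ 0) (x : Fin 11 → ℂ)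
    (hx : ∀ i, eval x (pderiv i ((FF p).map (Int.castRingHom ℂ))) = 0) : x = 0 := by
  have e0 : 93*x 0^2 + 11*x 1^2 + 121*x 2^2 - 44*(x 0*x 2) + 3*(x 1*x 2) = 0 := by
    have h := hx 0
    rw [pderiv_map] at h
    simp only [FF, T, map_add, pderiv_C_mul, pderiv_mul, pderiv_pow, pderiv_C,
      pderiv_X_self, pderiv_X_of_ne (show (1:Fin 11) ≠ 0 by decide), pderiv_X_of_ne (show (2:Fin 11) ≠ 0 by decide), pderiv_X_of_ne (show (3:Fin 11) ≠ 0 by decide), pderiv_X_of_ne (show (4:Fin 11) ≠ 0 by decide), pderiv_X_of_ne (show (5:Fin 11) ≠ 0 by decide), pderiv_X_of_ne (show (6:Fin 11) ≠ 0 by decide), pderiv_X_of_ne (show (7:Fin 11) ≠ 0 by decide), pderiv_X_of_ne (show (8:Fin 11) ≠ 0 by decide), pderiv_X_of_ne (show (9:Fin 11) ≠ 0 by decide), pderiv_X_of_ne (show (10:Fin 11) ≠ 0 by decide),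
      mul_zero, zero_mul, add_zero, zero_add, mul_one, one_mul, map_zero] at h
    simp only [map_add, map_mul, map_pow, MvPolynomial.map_C, map_X, map_natCast, map_ofNat,
      map_neg, eval_add, eval_mul, eval_pow, eval_C, eval_X, eq_intCast,
      Int.cast_ofNat, Int.cast_neg] at h
    linear_combination h
  have e1 : 87*x 1^2 + 22*(x 0*x 1) + 3*(x 0*x 2) - 11*x 2^2 = 0 := by
    have h := hx 1
    rw [pderiv_map] at h
    simp only [FF, T, map_add, pderiv_C_mul, pderiv_mul, pderiv_pow, pderiv_C,
      pderiv_X_self, pderiv_X_of_ne (show (0:Fin 11) ≠ 1 by decide), pderiv_X_of_ne (show (2:Fin 11) ≠ 1 by decide), pderiv_X_of_ne (show (3:Fin 11) ≠ 1 by decide), pderiv_X_of_ne (show (4:Fin 11) ≠ 1 by decide), pderiv_X_of_ne (show (5:Fin 11) ≠ 1 by decide), pderiv_X_of_ne (show (6:Fin 11) ≠ 1 by decide), pderiv_X_of_ne (show (7:Fin 11) ≠ 1 by decide), pderiv_X_of_ne (show (8:Fin 11) ≠ 1 by decide), pderiv_X_of_ne (show (9:Fin 11) ≠ 1 by decide),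 pderiv_X_of_ne (show (10:Fin 11) ≠ 1 by decide),
      mul_zero, zero_mul, add_zero, zero_add, mul_one, one_mul, map_zero] at h
    simp only [map_add, map_mul, map_pow, MvPolynomial.map_C, map_X, map_natCast, map_ofNat,
      map_neg, eval_add, eval_mul, eval_pow, eval_C, eval_X, eq_intCast,
      Int.cast_ofNat, Int.cast_neg] at h
    linear_combination h
  have e2 : 93*x 2^2 - 22*x 0^2 + 242*(x 0*x 2) + 3*(x 0*x 1) - 22*(x 1*x 2) = 0 := by
    have h := hx 2
    rw [pderiv_map] at h
    simp only [FF, T, map_add, pderiv_C_mul, pderiv_mul, pderiv_pow, pderiv_C,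
      pderiv_X_self, pderiv_X_of_ne (show (0:Fin 11) ≠ 2 by decide), pderiv_X_of_ne (show (1:Fin 11) ≠ 2 by decide), pderiv_X_of_ne (show (3:Fin 11) ≠ 2 by decide), pderiv_X_of_ne (show (4:Fin 11) ≠ 2 by decide), pderiv_X_of_ne (show (5:Fin 11) ≠ 2 by decide), pderiv_X_of_ne (show (6:Fin 11) ≠ 2 by decide), pderiv_X_of_ne (show (7:Fin 11) ≠ 2 by decide), pderiv_X_of_ne (show (8:Fin 11) ≠ 2 by decide), pderiv_X_of_ne (show (9:Fin 11) ≠ 2 by decide), pderiv_X_of_ne (show (10:Fin 11) ≠ 2 by decide),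
      mul_zero, zero_mul, add_zero, zero_add, mul_one, one_mul, map_zero] at h
    simp only [map_add, map_mul, map_pow, MvPolynomial.map_C, map_X, map_natCast, map_ofNat,
      map_neg, eval_add, eval_mul, eval_pow, eval_C, eval_X, eq_intCast,
      Int.cast_ofNat, Int.cast_neg] at h
    linear_combination h
  have e3 : 93*x 3^2 + 11*x 4^2 + 121*x 5^2 - 44*(x 3*x 5) + 3*(x 4*x 5) = 0 := by
    have h := hx 3
    rw [pderiv_map] at h
    simp only [FF, T, map_add, pderiv_C_mul, pderiv_mul, pderiv_pow, pderiv_C,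
      pderiv_X_self, pderiv_X_of_ne (show (0:Fin 11) ≠ 3 by decide), pderiv_X_of_ne (show (1:Fin 11) ≠ 3 by decide), pderiv_X_of_ne (show (2:Fin 11) ≠ 3 by decide), pderiv_X_of_ne (show (4:Fin 11) ≠ 3 by decide), pderiv_X_of_ne (show (5:Fin 11) ≠ 3 by decide), pderiv_X_of_ne (show (6:Fin 11) ≠ 3 by decide), pderiv_X_of_ne (show (7:Fin 11) ≠ 3 by decide), pderiv_X_of_ne (show (8:Fin 11) ≠ 3 by decide), pderiv_X_of_ne (show (9:Fin 11) ≠ 3 by decide), pderiv_X_of_ne (show (10:Fin 11) ≠ 3 by decide),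
      mul_zero, zero_mul, add_zero, zero_add, mul_one, one_mul, map_zero] at h
    simp only [map_add, map_mul, map_pow, MvPolynomial.map_C, map_X, map_natCast, map_ofNat,
      map_neg, eval_add, eval_mul, eval_pow, eval_C, eval_X, eq_intCast,
      Int.cast_ofNat, Int.cast_neg] at h
    have h' : ((p:ℂ)) * (93*x 3^2 + 11*x 4^2 + 121*x 5^2 - 44*(x 3*x 5) + 3*(x 4*x 5)) = 0 := by linear_combination h
    exact (mul_eq_zero.mp h').resolve_left hp0
  have e4 : 87*x 4^2 + 22*(x 3*x 4) + 3*(x 3*x 5) - 11*x 5^2 = 0 := by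
    have h := hx 4
    rw [pderiv_map] at h
    simp only [FF, T, map_add, pderiv_C_mul, pderiv_mul, pderiv_pow, pderiv_C,
      pderiv_X_self, pderiv_X_of_ne (show (0:Fin 11) ≠ 4 by decide), pderiv_X_of_ne (show (1:Fin 11) ≠ 4 by decide), pderiv_X_of_ne (show (2:Fin 11) ≠ 4 by decide), pderiv_X_of_ne (show (3:Fin 11) ≠ 4 by decide), pderiv_X_of_ne (show (5:Fin 11) ≠ 4 by decide), pderiv_X_of_ne (show (6:Fin 11) ≠ 4 by decide), pderiv_X_of_ne (show (7:Fin 11) ≠ 4 by decide), pderiv_X_of_ne (show (8:Fin 11) ≠ 4 by decide), pderiv_X_of_ne (show (9:Fin 11) ≠ 4 by decide), pderiv_X_of_ne (show (10:Fin 11) ≠ 4 by decide),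
      mul_zero, zero_mul, add_zero, zero_add, mul_one, one_mul, map_zero] at h
    simp only [map_add, map_mul, map_pow, MvPolynomial.map_C, map_X, map_natCast, map_ofNat,
      map_neg, eval_add, eval_mul, eval_pow, eval_C, eval_X, eq_intCast,
      Int.cast_ofNat, Int.cast_neg] at h
    have h' : ((p:ℂ)) * (87*x 4^2 + 22*(x 3*x 4) + 3*(x 3*x 5) - 11*x 5^2) = 0 := by linear_combination h
    exact (mul_eq_zero.mp h').resolve_left hp0
  have e5 : 93*x 5^2 - 22*x 3^2 + 242*(x 3*x 5) + 3*(x 3*x 4) - 22*(x 4*x 5) = 0 := by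
    have h := hx 5
    rw [pderiv_map] at h
    simp only [FF, T, map_add, pderiv_C_mul, pderiv_mul, pderiv_pow, pderiv_C,
      pderiv_X_self, pderiv_X_of_ne (show (0:Fin 11) ≠ 5 by decide), pderiv_X_of_ne (show (1:Fin 11) ≠ 5 by decide), pderiv_X_of_ne (show (2:Fin 11) ≠ 5 by decide), pderiv_X_of_ne (show (3:Fin 11) ≠ 5 by decide), pderiv_X_of_ne (show (4:Fin 11) ≠ 5 by decide), pderiv_X_of_ne (show (6:Fin 11) ≠ 5 by decide), pderiv_X_of_ne (show (7:Fin 11) ≠ 5 by decide), pderiv_X_of_ne (show (8:Fin 11) ≠ 5 by decide), pderiv_X_of_ne (show (9:Fin 11) ≠ 5 by decide), pderiv_X_of_ne (show (10:Fin 11) ≠ 5 by decide),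
      mul_zero, zero_mul, add_zero, zero_add, mul_one, one_mul, map_zero] at h
    simp only [map_add, map_mul, map_pow, MvPolynomial.map_C, map_X, map_natCast, map_ofNat,
      map_neg, eval_add, eval_mul, eval_pow, eval_C, eval_X, eq_intCast,
      Int.cast_ofNat, Int.cast_neg] at h
    have h' : ((p:ℂ)) * (93*x 5^2 - 22*x 3^2 + 242*(x 3*x 5) + 3*(x 3*x 4) - 22*(x 4*x 5)) = 0 := by linear_combination h
    exact (mul_eq_zero.mp h').resolve_left hp0
  have e6 : 93*x 6^2 + 11*x 7^2 + 121*x 8^2 - 44*(x 6*x 8) + 3*(x 7*x 8) = 0 := by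
    have h := hx 6
    rw [pderiv_map] at h
    simp only [FF, T, map_add, pderiv_C_mul, pderiv_mul, pderiv_pow, pderiv_C,
      pderiv_X_self, pderiv_X_of_ne (show (0:Fin 11) ≠ 6 by decide), pderiv_X_of_ne (show (1:Fin 11) ≠ 6 by decide), pderiv_X_of_ne (show (2:Fin 11) ≠ 6 by decide), pderiv_X_of_ne (show (3:Fin 11) ≠ 6 by decide), pderiv_X_of_ne (show (4:Fin 11) ≠ 6 by decide), pderiv_X_of_ne (show (5:Fin 11) ≠ 6 by decide), pderiv_X_of_ne (show (7:Fin 11) ≠ 6 by decide), pderiv_X_of_ne (show (8:Fin 11) ≠ 6 by decide), pderiv_X_of_ne (show (9:Fin 11) ≠ 6 by decide), pderiv_X_of_ne (show (10:Fin 11) ≠ 6 by decide),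
      mul_zero, zero_mul, add_zero, zero_add, mul_one, one_mul, map_zero] at h
    simp only [map_add, map_mul, map_pow, MvPolynomial.map_C, map_X, map_natCast, map_ofNat,
      map_neg, eval_add, eval_mul, eval_pow, eval_C, eval_X, eq_intCast,
      Int.cast_ofNat, Int.cast_neg] at h
    have h' : ((p:ℂ)^2) * (93*x 6^2 + 11*x 7^2 + 121*x 8^2 - 44*(x 6*x 8) + 3*(x 7*x 8)) = 0 := by linear_combination h
    exact (mul_eq_zero.mp h').resolve_left (pow_ne_zero 2 hp0)
  have e7 : 87*x 7^2 + 22*(x 6*x 7) + 3*(x 6*x 8) - 11*x 8^2 = 0 := by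
    have h := hx 7
    rw [pderiv_map] at h
    simp only [FF, T, map_add, pderiv_C_mul, pderiv_mul, pderiv_pow, pderiv_C,
      pderiv_X_self, pderiv_X_of_ne (show (0:Fin 11) ≠ 7 by decide), pderiv_X_of_ne (show (1:Fin 11) ≠ 7 by decide), pderiv_X_of_ne (show (2:Fin 11) ≠ 7 by decide), pderiv_X_of_ne (show (3:Fin 11) ≠ 7 by decide), pderiv_X_of_ne (show (4:Fin 11) ≠ 7 by decide), pderiv_X_of_ne (show (5:Fin 11) ≠ 7 by decide), pderiv_X_of_ne (show (6:Fin 11) ≠ 7 by decide), pderiv_X_of_ne (show (8:Fin 11) ≠ 7 by decide), pderiv_X_of_ne (show (9:Fin 11) ≠ 7 by decide), pderiv_X_of_ne (show (10:Fin 11) ≠ 7 by decide),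
      mul_zero, zero_mul, add_zero, zero_add, mul_one, one_mul, map_zero] at h
    simp only [map_add, map_mul, map_pow, MvPolynomial.map_C, map_X, map_natCast, map_ofNat,
      map_neg, eval_add, eval_mul, eval_pow, eval_C, eval_X, eq_intCast,
      Int.cast_ofNat, Int.cast_neg] at h
    have h' : ((p:ℂ)^2) * (87*x 7^2 + 22*(x 6*x 7) + 3*(x 6*x 8) - 11*x 8^2) = 0 := by linear_combination h
    exact (mul_eq_zero.mp h').resolve_left (pow_ne_zero 2 hp0)
  have e8 : 93*x 8^2 - 22*x 6^2 + 242*(x 6*x 8) + 3*(x 6*x 7) - 22*(x 7*x 8) = 0 := by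
    have h := hx 8
    rw [pderiv_map] at h
    simp only [FF, T, map_add, pderiv_C_mul, pderiv_mul, pderiv_pow, pderiv_C,
      pderiv_X_self, pderiv_X_of_ne (show (0:Fin 11) ≠ 8 by decide), pderiv_X_of_ne (show (1:Fin 11) ≠ 8 by decide), pderiv_X_of_ne (show (2:Fin 11) ≠ 8 by decide), pderiv_X_of_ne (show (3:Fin 11) ≠ 8 by decide), pderiv_X_of_ne (show (4:Fin 11) ≠ 8 by decide), pderiv_X_of_ne (show (5:Fin 11) ≠ 8 by decide), pderiv_X_of_ne (show (6:Fin 11) ≠ 8 by decide), pderiv_X_of_ne (show (7:Fin 11) ≠ 8 by decide), pderiv_X_of_ne (show (9:Fin 11) ≠ 8 by decide), pderiv_X_of_ne (show (10:Fin 11) ≠ 8 by decide),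
      mul_zero, zero_mul, add_zero, zero_add, mul_one, one_mul, map_zero] at h
    simp only [map_add, map_mul, map_pow, MvPolynomial.map_C, map_X, map_natCast, map_ofNat,
      map_neg, eval_add, eval_mul, eval_pow, eval_C, eval_X, eq_intCast,
      Int.cast_ofNat, Int.cast_neg] at h
    have h' : ((p:ℂ)^2) * (93*x 8^2 - 22*x 6^2 + 242*(x 6*x 8) + 3*(x 6*x 7) - 22*(x 7*x 8)) = 0 := by linear_combination h
    exact (mul_eq_zero.mp h').resolve_left (pow_ne_zero 2 hp0)
  have z9 : x 9 = 0 := by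
    have h := hx 9
    rw [pderiv_map] at h
    simp only [FF, T, map_add, pderiv_C_mul, pderiv_mul, pderiv_pow, pderiv_C,
      pderiv_X_self, pderiv_X_of_ne (show (0:Fin 11) ≠ 9 by decide), pderiv_X_of_ne (show (1:Fin 11) ≠ 9 by decide), pderiv_X_of_ne (show (2:Fin 11) ≠ 9 by decide), pderiv_X_of_ne (show (3:Fin 11) ≠ 9 by decide), pderiv_X_of_ne (show (4:Fin 11) ≠ 9 by decide), pderiv_X_of_ne (show (5:Fin 11) ≠ 9 by decide), pderiv_X_of_ne (show (6:Fin 11) ≠ 9 by decide), pderiv_X_of_ne (show (7:Fin 11) ≠ 9 by decide), pderiv_X_of_ne (show (8:Fin 11) ≠ 9 by decide), pderiv_X_of_ne (show (10:Fin 11) ≠ 9 by decide),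
      mul_zero, zero_mul, add_zero, zero_add, mul_one, one_mul, map_zero] at h
    simp only [map_add, map_mul, map_pow, MvPolynomial.map_C, map_X, map_natCast, map_ofNat,
      map_neg, eval_add, eval_mul, eval_pow, eval_C, eval_X, eq_intCast,
      Int.cast_ofNat, Int.cast_neg] at h
    have h2 : (x 9)^2 = 0 := by linear_combination h/3
    exact pow_eq_zero_iff (Nat.succ_ne_zero 1) |>.mp h2
  have z10 : x 10 = 0 := by
    have h := hx 10
    rw [pderiv_map] at h
    simp only [FF, T, map_add, pderiv_C_mul, pderiv_mul, pderiv_pow, pderiv_C,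
      pderiv_X_self, pderiv_X_of_ne (show (0:Fin 11) ≠ 10 by decide), pderiv_X_of_ne (show (1:Fin 11) ≠ 10 by decide), pderiv_X_of_ne (show (2:Fin 11) ≠ 10 by decide), pderiv_X_of_ne (show (3:Fin 11) ≠ 10 by decide), pderiv_X_of_ne (show (4:Fin 11) ≠ 10 by decide), pderiv_X_of_ne (show (5:Fin 11) ≠ 10 by decide), pderiv_X_of_ne (show (6:Fin 11) ≠ 10 by decide), pderiv_X_of_ne (show (7:Fin 11) ≠ 10 by decide), pderiv_X_of_ne (show (8:Fin 11) ≠ 10 by decide), pderiv_X_of_ne (show (9:Fin 11) ≠ 10 by decide),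
      mul_zero, zero_mul, add_zero, zero_add, mul_one, one_mul, map_zero] at h
    simp only [map_add, map_mul, map_pow, MvPolynomial.map_C, map_X, map_natCast, map_ofNat,
      map_neg, eval_add, eval_mul, eval_pow, eval_C, eval_X, eq_intCast,
      Int.cast_ofNat, Int.cast_neg] at h
    have h2 : (x 10)^2 = 0 := by linear_combination h/3
    exact pow_eq_zero_iff (Nat.succ_ne_zero 1) |>.mp h2
  have z0 : x 0 = 0 := by
    have h5 : (x 0) ^ 5 = 0 := by linear_combination (((-5403507300482904759879102757 : ℂ)*x 2*x 2*x 2)/440770194875943143457029585586 + ((-2576259002553019632655997993 : ℂ)*x 1*x 2*x 2)/367308495729952619547524654655 + ((120501864309824729672952728387 : ℂ)*x 1*x 1*x 2)/2203850974379715717285147927930 + ((515362529873633633447296700 : ℂ)*x 1*x 1*x 1)/24487233048663507969834976977 + ((-9317 : ℂ)*x 0*x 2*x 2)/804357 + ((-1 : ℂ)*x 0*x 1*x 2)/2883 + ((-11 : ℂ)*x 0*x 1*x 1)/8649 + ((44 : ℂ)*x 0*x 0*x 2)/8649 + ((1 : ℂ)*x 0*x 0*x 0)/93) * e0 + (((-33065171494865581501762247003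 : ℂ)*x 2*x 2*x 2)/440770194875943143457029585586 + ((-135529433916257670339932816869 : ℂ)*x 1*x 2*x 2)/1101925487189857858642573963965 + ((31542578933187015264639047287 : ℂ)*x 1*x 1*x 2)/2203850974379715717285147927930 + ((-195482338917585171307595300 : ℂ)*x 1*x 1*x 1)/73461699145990523909504930931 + ((25063181330863338641731876339 : ℂ)*x 0*x 2*x 2)/440770194875943143457029585586 + ((-86066965024880999675721503177 : ℂ)*x 0*x 1*x 2)/367308495729952619547524654655 + ((-4759618971867730749864824717 : ℂ)*x 0*x 1*x 1)/2203850974379715717285147927930) * e1 + (((1559717725348978921645089874 : ℂ)*x 2*x 2*x 2)/220385097437971571728514792793 + ((-1477619357462704430129378741 : ℂ)*x 1*x 2*x 2)/440770194875943143457029585586 + ((592508640312561753794361623 : ℂ)*x 1*x 1*x 2)/367308495729952619547524654655 + ((191312398075510156157129419783 : ℂ)*x 1*x 1*x 1)/2203850974379715717285147927930) * e2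
    exact pow_eq_zero_iff (Nat.succ_ne_zero 4) |>.mp h5
  have z1 : x 1 = 0 := by
    have h5 : (x 1) ^ 5 = 0 := by linear_combination (((44407497451184586202 : ℂ)*x 2*x 2*x 2)/12329512125472546055772705 + ((161738771947513216774 : ℂ)*x 1*x 2*x 2)/4109837375157515351924235 + ((679630026493747201301 : ℂ)*x 1*x 1*x 2)/8219674750315030703848470 + ((187455304428252065414 : ℂ)*x 1*x 1*x 1)/273989158343834356794949) * e0 + (((-175143285272899571518 : ℂ)*x 2*x 2*x 2)/12329512125472546055772705 + ((1849704222230279406794 : ℂ)*x 1*x 2*x 2)/4109837375157515351924235 + ((-264865811313740027039 : ℂ)*x 1*x 1*x 2)/8219674750315030703848470 + ((3125599425231305564085 : ℂ)*x 1*x 1*x 1)/273989158343834356794949 + ((-1952250461313227780782 : ℂ)*x 0*x 2*x 2)/12329512125472546055772705 + ((-229407078616782137194 : ℂ)*x 0*x 1*x 2)/4109837375157515351924235 + ((-23713487147688397261631 : ℂ)*x 0*x 1*x 1)/8219674750315030703848470) * e1 + (((-1744297091898501844 : ℂ)*x 2*x 2*x 2)/273989158343834356794949 + ((5042887132460775818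 : ℂ)*x 1*x 2*x 2)/12329512125472546055772705 + ((-409745009961025365919 : ℂ)*x 1*x 1*x 2)/4109837375157515351924235 + ((59253732076296488599 : ℂ)*x 1*x 1*x 1)/8219674750315030703848470) * e2
    exact pow_eq_zero_iff (Nat.succ_ne_zero 4) |>.mp h5
  have z2 : x 2 = 0 := by
    have h5 : (x 2) ^ 5 = 0 := by linear_combination (((-2770609808152722512779 : ℂ)*x 2*x 2*x 2)/2465902425094509211154541 + ((-62586656800858325191771 : ℂ)*x 1*x 2*x 2)/8219674750315030703848470 + ((1350729981479862099093173 : ℂ)*x 1*x 1*x 2)/24659024250945092111545410 + ((5720415406305582857358 : ℂ)*x 1*x 1*x 1)/273989158343834356794949) * e0 + (((-182790736246946835556043 : ℂ)*x 2*x 2*x 2)/2465902425094509211154541 + ((-1005913065684584469826241 : ℂ)*x 1*x 2*x 2)/8219674750315030703848470 + ((347487381822332107436113 : ℂ)*x 1*x 1*x 2)/24659024250945092111545410 + ((-723270913440935763574 : ℂ)*x 1*x 1*x 1)/273989158343834356794949 + ((148218145951016174849035 : ℂ)*x 0*x 2*x 2)/2465902425094509211154541 + ((-1906950089002421677569179 :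 ℂ)*x 0*x 1*x 2)/8219674750315030703848470 + ((-56633308011538395801503 : ℂ)*x 0*x 1*x 1)/24659024250945092111545410) * e1 + (((944382453004269347771 : ℂ)*x 2*x 2*x 2)/273989158343834356794949 + ((-9164708814716860726541 : ℂ)*x 1*x 2*x 2)/2465902425094509211154541 + ((-6222992735867737747049 : ℂ)*x 1*x 1*x 2)/8219674750315030703848470 + ((2119724735205631082202427 : ℂ)*x 1*x 1*x 1)/24659024250945092111545410) * e2
    exact pow_eq_zero_iff (Nat.succ_ne_zero 4) |>.mp h5
  have z3 : x 3 = 0 := by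
    have h5 : (x 3) ^ 5 = 0 := by linear_combination (((-5403507300482904759879102757 : ℂ)*x 5*x 5*x 5)/440770194875943143457029585586 + ((-2576259002553019632655997993 : ℂ)*x 4*x 5*x 5)/367308495729952619547524654655 + ((120501864309824729672952728387 : ℂ)*x 4*x 4*x 5)/2203850974379715717285147927930 + ((515362529873633633447296700 : ℂ)*x 4*x 4*x 4)/24487233048663507969834976977 + ((-9317 : ℂ)*x 3*x 5*x 5)/804357 + ((-1 : ℂ)*x 3*x 4*x 5)/2883 + ((-11 : ℂ)*x 3*x 4*x 4)/8649 + ((44 : ℂ)*x 3*x 3*x 5)/8649 + ((1 : ℂ)*x 3*x 3*x 3)/93) * e3 + (((-33065171494865581501762247003 : ℂ)*x 5*x 5*x 5)/440770194875943143457029585586 + ((-135529433916257670339932816869 : ℂ)*x 4*x 5*x 5)/1101925487189857858642573963965 + ((31542578933187015264639047287 : ℂ)*x 4*x 4*x 5)/2203850974379715717285147927930 + ((-195482338917585171307595300 : ℂ)*x 4*x 4*x 4)/73461699145990523909504930931 + ((25063181330863338641731876339 : ℂ)*x 3*x 5*x 5)/440770194875943143457029585586 + ((-86066965024880999675721503177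 : ℂ)*x 3*x 4*x 5)/367308495729952619547524654655 + ((-4759618971867730749864824717 : ℂ)*x 3*x 4*x 4)/2203850974379715717285147927930) * e4 + (((1559717725348978921645089874 : ℂ)*x 5*x 5*x 5)/220385097437971571728514792793 + ((-1477619357462704430129378741 : ℂ)*x 4*x 5*x 5)/440770194875943143457029585586 + ((592508640312561753794361623 : ℂ)*x 4*x 4*x 5)/367308495729952619547524654655 + ((191312398075510156157129419783 : ℂ)*x 4*x 4*x 4)/2203850974379715717285147927930) * e5
    exact pow_eq_zero_iff (Nat.succ_ne_zero 4) |>.mp h5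
  have z4 : x 4 = 0 := by
    have h5 : (x 4) ^ 5 = 0 := by linear_combination (((44407497451184586202 : ℂ)*x 5*x 5*x 5)/12329512125472546055772705 + ((161738771947513216774 : ℂ)*x 4*x 5*x 5)/4109837375157515351924235 + ((679630026493747201301 : ℂ)*x 4*x 4*x 5)/8219674750315030703848470 + ((187455304428252065414 : ℂ)*x 4*x 4*x 4)/273989158343834356794949) * e3 + (((-175143285272899571518 : ℂ)*x 5*x 5*x 5)/12329512125472546055772705 + ((1849704222230279406794 : ℂ)*x 4*x 5*x 5)/4109837375157515351924235 + ((-264865811313740027039 : ℂ)*x 4*x 4*x 5)/8219674750315030703848470 + ((3125599425231305564085 : ℂ)*x 4*x 4*x 4)/273989158343834356794949 + ((-1952250461313227780782 : ℂ)*x 3*x 5*x 5)/12329512125472546055772705 + ((-229407078616782137194 : ℂ)*x 3*x 4*x 5)/4109837375157515351924235 + ((-23713487147688397261631 : ℂ)*x 3*x 4*x 4)/8219674750315030703848470) * e4 + (((-1744297091898501844 : ℂ)*x 5*x 5*x 5)/273989158343834356794949 + ((5042887132460775818 : ℂ)*x 4*x 5*x 5)/12329512125472546055772705 + ((-409745009961025365919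 : ℂ)*x 4*x 4*x 5)/4109837375157515351924235 + ((59253732076296488599 : ℂ)*x 4*x 4*x 4)/8219674750315030703848470) * e5
    exact pow_eq_zero_iff (Nat.succ_ne_zero 4) |>.mp h5
  have z5 : x 5 = 0 := by
    have h5 : (x 5) ^ 5 = 0 := by linear_combination (((-2770609808152722512779 : ℂ)*x 5*x 5*x 5)/2465902425094509211154541 + ((-62586656800858325191771 : ℂ)*x 4*x 5*x 5)/8219674750315030703848470 + ((1350729981479862099093173 : ℂ)*x 4*x 4*x 5)/24659024250945092111545410 + ((5720415406305582857358 : ℂ)*x 4*x 4*x 4)/273989158343834356794949) * e3 + (((-182790736246946835556043 : ℂ)*x 5*x 5*x 5)/2465902425094509211154541 + ((-1005913065684584469826241 : ℂ)*x 4*x 5*x 5)/8219674750315030703848470 + ((347487381822332107436113 : ℂ)*x 4*x 4*x 5)/24659024250945092111545410 + ((-723270913440935763574 : ℂ)*x 4*x 4*x 4)/273989158343834356794949 + ((148218145951016174849035 : ℂ)*x 3*x 5*x 5)/2465902425094509211154541 + ((-1906950089002421677569179 : ℂ)*x 3*x 4*x 5)/8219674750315030703848470 + ((-56633308011538395801503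 : ℂ)*x 3*x 4*x 4)/24659024250945092111545410) * e4 + (((944382453004269347771 : ℂ)*x 5*x 5*x 5)/273989158343834356794949 + ((-9164708814716860726541 : ℂ)*x 4*x 5*x 5)/2465902425094509211154541 + ((-6222992735867737747049 : ℂ)*x 4*x 4*x 5)/8219674750315030703848470 + ((2119724735205631082202427 : ℂ)*x 4*x 4*x 4)/24659024250945092111545410) * e5
    exact pow_eq_zero_iff (Nat.succ_ne_zero 4) |>.mp h5
  have z6 : x 6 = 0 := by
    have h5 : (x 6) ^ 5 = 0 := by linear_combination (((-5403507300482904759879102757 : ℂ)*x 8*x 8*x 8)/440770194875943143457029585586 + ((-2576259002553019632655997993 : ℂ)*x 7*x 8*x 8)/367308495729952619547524654655 + ((120501864309824729672952728387 : ℂ)*x 7*x 7*x 8)/2203850974379715717285147927930 + ((515362529873633633447296700 : ℂ)*x 7*x 7*x 7)/24487233048663507969834976977 + ((-9317 : ℂ)*x 6*x 8*x 8)/804357 + ((-1 : ℂ)*x 6*x 7*x 8)/2883 + ((-11 : ℂ)*x 6*x 7*x 7)/8649 + ((44 : ℂ)*x 6*x 6*x 8)/8649 + ((1 : ℂ)*x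 6*x 6*x 6)/93) * e6 + (((-33065171494865581501762247003 : ℂ)*x 8*x 8*x 8)/440770194875943143457029585586 + ((-135529433916257670339932816869 : ℂ)*x 7*x 8*x 8)/1101925487189857858642573963965 + ((31542578933187015264639047287 : ℂ)*x 7*x 7*x 8)/2203850974379715717285147927930 + ((-195482338917585171307595300 : ℂ)*x 7*x 7*x 7)/73461699145990523909504930931 + ((25063181330863338641731876339 : ℂ)*x 6*x 8*x 8)/440770194875943143457029585586 + ((-86066965024880999675721503177 : ℂ)*x 6*x 7*x 8)/367308495729952619547524654655 + ((-4759618971867730749864824717 : ℂ)*x 6*x 7*x 7)/2203850974379715717285147927930) * e7 + (((1559717725348978921645089874 : ℂ)*x 8*x 8*x 8)/220385097437971571728514792793 + ((-1477619357462704430129378741 : ℂ)*x 7*x 8*x 8)/440770194875943143457029585586 + ((592508640312561753794361623 : ℂ)*x 7*x 7*x 8)/367308495729952619547524654655 + ((191312398075510156157129419783 : ℂ)*x 7*x 7*x 7)/2203850974379715717285147927930) * e8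
    exact pow_eq_zero_iff (Nat.succ_ne_zero 4) |>.mp h5
  have z7 : x 7 = 0 := by
    have h5 : (x 7) ^ 5 = 0 := by linear_combination (((44407497451184586202 : ℂ)*x 8*x 8*x 8)/12329512125472546055772705 + ((161738771947513216774 : ℂ)*x 7*x 8*x 8)/4109837375157515351924235 + ((679630026493747201301 : ℂ)*x 7*x 7*x 8)/8219674750315030703848470 + ((187455304428252065414 : ℂ)*x 7*x 7*x 7)/273989158343834356794949) * e6 + (((-175143285272899571518 : ℂ)*x 8*x 8*x 8)/12329512125472546055772705 + ((1849704222230279406794 : ℂ)*x 7*x 8*x 8)/4109837375157515351924235 + ((-264865811313740027039 : ℂ)*x 7*x 7*x 8)/8219674750315030703848470 + ((3125599425231305564085 : ℂ)*x 7*x 7*x 7)/273989158343834356794949 + ((-1952250461313227780782 : ℂ)*x 6*x 8*x 8)/12329512125472546055772705 + ((-229407078616782137194 : ℂ)*x 6*x 7*x 8)/4109837375157515351924235 + ((-23713487147688397261631 : ℂ)*x 6*x 7*x 7)/8219674750315030703848470) * e7 + (((-1744297091898501844 : ℂ)*x 8*x 8*x 8)/273989158343834356794949 + ((5042887132460775818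 : ℂ)*x 7*x 8*x 8)/12329512125472546055772705 + ((-409745009961025365919 : ℂ)*x 7*x 7*x 8)/4109837375157515351924235 + ((59253732076296488599 : ℂ)*x 7*x 7*x 7)/8219674750315030703848470) * e8
    exact pow_eq_zero_iff (Nat.succ_ne_zero 4) |>.mp h5
  have z8 : x 8 = 0 := by
    have h5 : (x 8) ^ 5 = 0 := by linear_combination (((-2770609808152722512779 : ℂ)*x 8*x 8*x 8)/2465902425094509211154541 + ((-62586656800858325191771 : ℂ)*x 7*x 8*x 8)/8219674750315030703848470 + ((1350729981479862099093173 : ℂ)*x 7*x 7*x 8)/24659024250945092111545410 + ((5720415406305582857358 : ℂ)*x 7*x 7*x 7)/273989158343834356794949) * e6 + (((-182790736246946835556043 : ℂ)*x 8*x 8*x 8)/2465902425094509211154541 + ((-1005913065684584469826241 : ℂ)*x 7*x 8*x 8)/8219674750315030703848470 + ((347487381822332107436113 : ℂ)*x 7*x 7*x 8)/24659024250945092111545410 + ((-723270913440935763574 : ℂ)*x 7*x 7*x 7)/273989158343834356794949 + ((148218145951016174849035 : ℂ)*x 6*x 8*x 8)/2465902425094509211154541 + ((-1906950089002421677569179 :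 ℂ)*x 6*x 7*x 8)/8219674750315030703848470 + ((-56633308011538395801503 : ℂ)*x 6*x 7*x 7)/24659024250945092111545410) * e7 + (((944382453004269347771 : ℂ)*x 8*x 8*x 8)/273989158343834356794949 + ((-9164708814716860726541 : ℂ)*x 7*x 8*x 8)/2465902425094509211154541 + ((-6222992735867737747049 : ℂ)*x 7*x 7*x 8)/8219674750315030703848470 + ((2119724735205631082202427 : ℂ)*x 7*x 7*x 7)/24659024250945092111545410) * e8
    exact pow_eq_zero_iff (Nat.succ_ne_zero 4) |>.mp h5
  funext i
  fin_cases i <;> simp [z0,z1,z2,z3,z4,z5,z6,z7,z8,z9,z10]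



variable {p : ℕ} [hp : Fact p.Prime]

lemma map_phi {R S : Type*} [CommRing R] [CommRing S] (f : R →+* S) (a b c : R) :
    f (phi a b c) = phi (f a) (f b) (f c) := by
  simp only [phi, map_add, map_sub, map_mul, map_pow, map_ofNat]

lemma toZMod_eq_zero_iff (x : ℤ_[p]) : PadicInt.toZMod x = 0 ↔ ‖x‖ < 1 := by
  rw [← RingHom.mem_ker, PadicInt.ker_toZMod, PadicInt.maximalIdeal_eq_span_p,
    Ideal.mem_span_singleton, ← PadicInt.norm_lt_one_iff_dvd]

lemma phi_unit_norm (haniso : ∀ a b c : ZMod p, phi a b c = 0 → a = 0 ∧ b = 0 ∧ c = 0)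
    (a b c : ℤ_[p]) (h : ‖a‖ = 1 ∨ ‖b‖ = 1 ∨ ‖c‖ = 1) : ‖phi a b c‖ = 1 := by
  rcases lt_or_eq_of_le (PadicInt.norm_le_one (phi a b c)) with hlt | heq
  · exfalso
    have hker : phi (PadicInt.toZMod a) (PadicInt.toZMod b) (PadicInt.toZMod c) = 0 := by
      rw [← map_phi]
      exact (toZMod_eq_zero_iff _).mpr hlt
    obtain ⟨h1, h2, h3⟩ := haniso _ _ _ hker
    rcases h with h | h | h
    · exact absurd ((toZMod_eq_zero_iff _).mp h1) (by rw [h]; exact lt_irrefl 1)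
    · exact absurd ((toZMod_eq_zero_iff _).mp h2) (by rw [h]; exact lt_irrefl 1)
    · exact absurd ((toZMod_eq_zero_iff _).mp h3) (by rw [h]; exact lt_irrefl 1)
  · exact heq

lemma phi_coe (a b c : ℤ_[p]) :
    ((phi a b c : ℤ_[p]) : ℚ_[p]) = phi (a : ℚ_[p]) (b : ℚ_[p]) (c : ℚ_[p]) :=
  map_phi (PadicInt.Coe.ringHom) a b c

lemma phi_mul {R : Type*} [CommRing R] (k a b c : R) :
    phi (k * a) (k * b) (k * c) = k ^ 3 * phi a b c := by
  simp only [phi]; ring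

lemma phi_smul_inv (γ a b c : ℚ_[p]) (hγ : γ ≠ 0) :
    phi a b c = γ ^ 3 * phi (γ⁻¹ * a) (γ⁻¹ * b) (γ⁻¹ * c) := by
  rw [← phi_mul]
  rw [← mul_assoc, ← mul_assoc, ← mul_assoc, mul_inv_cancel₀ hγ, one_mul, one_mul, one_mul]

lemma phi_norm (haniso : ∀ a b c : ZMod p, phi a b c = 0 → a = 0 ∧ b = 0 ∧ c = 0)
    (a b c : ℚ_[p]) (h : ¬(a = 0 ∧ b = 0 ∧ c = 0)) :
    ∃ v : ℤ, max ‖a‖ (max ‖b‖ ‖c‖) = (p : ℝ) ^ v ∧ ‖phi a b c‖ = ((p : ℝ) ^ v) ^ 3 := by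
  have hmpos : 0 < max ‖a‖ (max ‖b‖ ‖c‖) := by
    by_contra hneg
    push_neg at hneg
    exact h ⟨norm_le_zero_iff.mp (le_trans (le_max_left _ _) hneg),
      norm_le_zero_iff.mp (le_trans (le_trans (le_max_left _ _) (le_max_right _ _)) hneg),
      norm_le_zero_iff.mp (le_trans (le_trans (le_max_right _ _) (le_max_right _ _)) hneg)⟩
  obtain ⟨z, hzabc, hz0, hzmax⟩ :
      ∃ z : ℚ_[p], (z = a ∨ z = b ∨ z = c) ∧ z ≠ 0 ∧ max ‖a‖ (max ‖b‖ ‖c‖) = ‖z‖ := by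
    rcases max_cases ‖a‖ (max ‖b‖ ‖c‖) with ⟨h1, _⟩ | ⟨h1, _⟩
    · exact ⟨a, Or.inl rfl, norm_pos_iff.mp (h1 ▸ hmpos), h1⟩
    · rcases max_cases ‖b‖ ‖c‖ with ⟨h2, _⟩ | ⟨h2, _⟩
      · exact ⟨b, Or.inr (Or.inl rfl), norm_pos_iff.mp (h2 ▸ h1 ▸ hmpos),
          by rw [h1, h2]⟩
      · exact ⟨c, Or.inr (Or.inr rfl), norm_pos_iff.mp (h2 ▸ h1 ▸ hmpos),
          by rw [h1, h2]⟩
  set m := max ‖a‖ (max ‖b‖ ‖c‖) with hm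
  refine ⟨-z.valuation, by rw [hzmax]; exact Padic.norm_eq_zpow_neg_valuation hz0, ?_⟩
  have hval : m = (p : ℝ) ^ (-z.valuation) := by rw [hzmax]; exact Padic.norm_eq_zpow_neg_valuation hz0
  set γ : ℚ_[p] := (p : ℚ_[p]) ^ (z.valuation) with hγdef
  have hp0 : (p : ℚ_[p]) ≠ 0 := Nat.cast_ne_zero.mpr hp.out.ne_zero
  have hγ0 : γ ≠ 0 := zpow_ne_zero _ hp0
  have hγnorm : ‖γ‖ = m := by rw [hγdef, Padic.norm_p_zpow, hval]
  have hmne : m ≠ 0 := ne_of_gt hmpos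
  have hnorm_eq : ∀ x : ℚ_[p], ‖γ⁻¹ * x‖ = ‖x‖ / m := by
    intro x
    rw [norm_mul, norm_inv, hγnorm, inv_mul_eq_div, div_eq_div_iff hmne hmne]
  have hA : ‖γ⁻¹ * a‖ ≤ 1 := by
    rw [hnorm_eq]; exact div_le_one_of_le₀ (le_max_left _ _) (le_of_lt hmpos)
  have hB : ‖γ⁻¹ * b‖ ≤ 1 := by
    rw [hnorm_eq]
    exact div_le_one_of_le₀ (le_trans (le_max_left _ _) (le_max_right _ _)) (le_of_lt hmpos)
  have hC : ‖γ⁻¹ * c‖ ≤ 1 := by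
    rw [hnorm_eq]
    exact div_le_one_of_le₀ (le_trans (le_max_right _ _) (le_max_right _ _)) (le_of_lt hmpos)
  have hone : ‖γ⁻¹ * a‖ = 1 ∨ ‖γ⁻¹ * b‖ = 1 ∨ ‖γ⁻¹ * c‖ = 1 := by
    have : ‖γ⁻¹ * z‖ = 1 := by rw [hnorm_eq, hzmax]; exact div_self (hzmax ▸ hmne)
    rcases hzabc with rfl | rfl | rfl
    · exact Or.inl this
    · exact Or.inr (Or.inl this)
    · exact Or.inr (Or.inr this)
  -- pass to the integers
  set A : ℤ_[p] := ⟨γ⁻¹ * a, hA⟩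
  set B : ℤ_[p] := ⟨γ⁻¹ * b, hB⟩
  set C : ℤ_[p] := ⟨γ⁻¹ * c, hC⟩
  have hABC : ‖phi A B C‖ = 1 := by
    apply phi_unit_norm haniso
    rcases hone with h1 | h1 | h1
    · exact Or.inl (by rw [PadicInt.norm_def]; exact h1)
    · exact Or.inr (Or.inl (by rw [PadicInt.norm_def]; exact h1))
    · exact Or.inr (Or.inr (by rw [PadicInt.norm_def]; exact h1))
  have key : phi a b c = γ ^ 3 * ((phi A B C : ℤ_[p]) : ℚ_[p]) := by
    rw [phi_coe]
    exact phi_smul_inv γ a b c hγ0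
  rw [key, norm_mul, norm_pow, hγnorm, ← PadicInt.norm_def, hABC, mul_one, hval]

lemma ultra3 (A B C : ℚ_[p]) (hsum : A + B + C = 0)
    (hAB : ‖A‖ = ‖B‖ → A = 0 ∧ B = 0)
    (hAC : ‖A‖ = ‖C‖ → A = 0 ∧ C = 0)
    (hBC : ‖B‖ = ‖C‖ → B = 0 ∧ C = 0) :
    A = 0 ∧ B = 0 ∧ C = 0 := by
  by_cases h1 : ‖A‖ = ‖B‖
  · obtain ⟨hA, hB⟩ := hAB h1
    refine ⟨hA, hB, ?_⟩
    rw [hA, hB] at hsum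
    simpa using hsum
  · exfalso
    have hC : ‖C‖ = max ‖A‖ ‖B‖ := by
      have hCeq : C = -(A + B) := by linear_combination hsum
      rw [hCeq, norm_neg]
      exact Padic.add_eq_max_of_ne h1
    rcases max_cases ‖A‖ ‖B‖ with ⟨hmax, _⟩ | ⟨hmax, _⟩
    · obtain ⟨hA, hC0⟩ := hAC (by rw [hC, hmax])
      rw [hA, hC0] at hsum
      have hB : B = 0 := by simpa using hsum
      exact h1 (by rw [hA, hB])
    · obtain ⟨hB, hC0⟩ := hBC (by rw [hC, hmax])
      rw [hB, hC0] at hsum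
      have hA : A = 0 := by simpa using hsum
      exact h1 (by rw [hA, hB])

lemma phi_zero_triple {a b c : ℚ_[p]} (ha : a = 0) (hb : b = 0) (hc : c = 0) :
    phi a b c = 0 := by
  rw [ha, hb, hc]; simp [phi]

lemma G_aniso (haniso : ∀ a b c : ZMod p, phi a b c = 0 → a = 0 ∧ b = 0 ∧ c = 0)
    (a₀ a₁ a₂ b₀ b₁ b₂ c₀ c₁ c₂ : ℚ_[p])
    (h : phi a₀ a₁ a₂ + (p : ℚ_[p]) * phi b₀ b₁ b₂ + (p : ℚ_[p]) ^ 2 * phi c₀ c₁ c₂ = 0) :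
    a₀ = 0 ∧ a₁ = 0 ∧ a₂ = 0 ∧ b₀ = 0 ∧ b₁ = 0 ∧ b₂ = 0 ∧ c₀ = 0 ∧ c₁ = 0 ∧ c₂ = 0 := by
  have hpR : (0 : ℝ) < (p : ℝ) := by exact_mod_cast hp.out.pos
  have hpR0 : (p : ℝ) ≠ 0 := ne_of_gt hpR
  have hpR1 : (p : ℝ) ≠ 1 := by exact_mod_cast hp.out.ne_one
  have hinj := zpow_right_injective₀ hpR hpR1
  have hnormp : ‖(p : ℚ_[p])‖ = (p : ℝ) ^ (-1 : ℤ) := by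
    rw [Padic.norm_p, zpow_neg_one]
  have hnormp2 : ‖(p : ℚ_[p]) ^ 2‖ = (p : ℝ) ^ (-2 : ℤ) := by
    rw [norm_pow, Padic.norm_p, ← zpow_neg_one, ← zpow_natCast ((p:ℝ)^(-1:ℤ)) 2,
      ← zpow_mul]
    norm_num
  -- norms of the three summands, in the nonzero cases
  have normA : ¬(a₀ = 0 ∧ a₁ = 0 ∧ a₂ = 0) →
      ∃ v : ℤ, ‖phi a₀ a₁ a₂‖ = (p : ℝ) ^ (3 * v) := by
    intro hne
    obtain ⟨v, _, hv⟩ := phi_norm haniso _ _ _ hne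
    refine ⟨v, ?_⟩
    rw [hv, ← zpow_natCast ((p:ℝ)^v) 3, ← zpow_mul]
    congr 1
    push_cast
    ring
  have normB : ¬(b₀ = 0 ∧ b₁ = 0 ∧ b₂ = 0) →
      ∃ v : ℤ, ‖(p : ℚ_[p]) * phi b₀ b₁ b₂‖ = (p : ℝ) ^ (3 * v - 1) := by
    intro hne
    obtain ⟨v, _, hv⟩ := phi_norm haniso _ _ _ hne
    refine ⟨v, ?_⟩
    rw [norm_mul, hnormp, hv, ← zpow_natCast ((p:ℝ)^v) 3, ← zpow_mul, ← zpow_add₀ hpR0]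
    congr 1
    push_cast
    ring
  have normC : ¬(c₀ = 0 ∧ c₁ = 0 ∧ c₂ = 0) →
      ∃ v : ℤ, ‖(p : ℚ_[p]) ^ 2 * phi c₀ c₁ c₂‖ = (p : ℝ) ^ (3 * v - 2) := by
    intro hne
    obtain ⟨v, _, hv⟩ := phi_norm haniso _ _ _ hne
    refine ⟨v, ?_⟩
    rw [norm_mul, hnormp2, hv, ← zpow_natCast ((p:ℝ)^v) 3, ← zpow_mul, ← zpow_add₀ hpR0]
    congr 1
    push_cast
    ring
  have hpQ : (p : ℚ_[p]) ≠ 0 := Nat.cast_ne_zero.mpr hp.out.ne_zero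
  -- main ultrametric step
  obtain ⟨hA, hB, hC⟩ := ultra3 _ _ _ h
    (by
      intro heq
      by_cases ha : a₀ = 0 ∧ a₁ = 0 ∧ a₂ = 0
      · have hA0 : phi a₀ a₁ a₂ = 0 := phi_zero_triple ha.1 ha.2.1 ha.2.2
        refine ⟨hA0, ?_⟩
        rw [hA0, norm_zero] at heq
        exact norm_eq_zero.mp heq.symm
      · by_cases hb : b₀ = 0 ∧ b₁ = 0 ∧ b₂ = 0
        · have hB0 : phi b₀ b₁ b₂ = 0 := phi_zero_triple hb.1 hb.2.1 hb.2.2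
          rw [hB0, mul_zero, norm_zero] at heq
          obtain ⟨v, hv⟩ := normA ha
          exact absurd (hv ▸ heq) (zpow_ne_zero _ hpR0)
        · obtain ⟨v, hv⟩ := normA ha
          obtain ⟨w, hw⟩ := normB hb
          rw [hv, hw] at heq
          have := hinj heq
          omega)
    (by
      intro heq
      by_cases ha : a₀ = 0 ∧ a₁ = 0 ∧ a₂ = 0
      · have hA0 : phi a₀ a₁ a₂ = 0 := phi_zero_triple ha.1 ha.2.1 ha.2.2
        refine ⟨hA0, ?_⟩
        rw [hA0, norm_zero] at heq
        exact norm_eq_zero.mp heq.symm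
      · by_cases hc : c₀ = 0 ∧ c₁ = 0 ∧ c₂ = 0
        · have hC0 : phi c₀ c₁ c₂ = 0 := phi_zero_triple hc.1 hc.2.1 hc.2.2
          rw [hC0, mul_zero, norm_zero] at heq
          obtain ⟨v, hv⟩ := normA ha
          exact absurd (hv ▸ heq) (zpow_ne_zero _ hpR0)
        · obtain ⟨v, hv⟩ := normA ha
          obtain ⟨w, hw⟩ := normC hc
          rw [hv, hw] at heq
          have := hinj heq
          omega)
    (by
      intro heq
      by_cases hb : b₀ = 0 ∧ b₁ = 0 ∧ b₂ = 0
      · have hB0 : phi b₀ b₁ b₂ = 0 := phi_zero_triple hb.1 hb.2.1 hb.2.2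
        rw [hB0, mul_zero]
        refine ⟨rfl, ?_⟩
        rw [hB0, mul_zero, norm_zero] at heq
        exact norm_eq_zero.mp heq.symm
      · by_cases hc : c₀ = 0 ∧ c₁ = 0 ∧ c₂ = 0
        · have hC0 : phi c₀ c₁ c₂ = 0 := phi_zero_triple hc.1 hc.2.1 hc.2.2
          rw [hC0, mul_zero, norm_zero] at heq
          obtain ⟨v, hv⟩ := normB hb
          exact absurd (hv ▸ heq) (zpow_ne_zero _ hpR0)
        · obtain ⟨v, hv⟩ := normB hb
          obtain ⟨w, hw⟩ := normC hc
          rw [hv, hw] at heq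
          have := hinj heq
          omega)
  -- now each block must vanish
  have hblockA : a₀ = 0 ∧ a₁ = 0 ∧ a₂ = 0 := by
    by_contra ha
    obtain ⟨v, hv⟩ := normA ha
    rw [hA, norm_zero] at hv
    exact (zpow_ne_zero _ hpR0) hv.symm
  have hblockB : b₀ = 0 ∧ b₁ = 0 ∧ b₂ = 0 := by
    by_contra hb
    have hphiB : phi b₀ b₁ b₂ = 0 := by
      rcases mul_eq_zero.mp hB with h' | h'
      · exact absurd h' hpQ
      · exact h'
    obtain ⟨v, _, hv⟩ := phi_norm haniso _ _ _ hb
    rw [hphiB, norm_zero] at hv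
    exact (pow_ne_zero _ (zpow_ne_zero _ hpR0)) hv.symm
  have hblockC : c₀ = 0 ∧ c₁ = 0 ∧ c₂ = 0 := by
    by_contra hc
    have hphiC : phi c₀ c₁ c₂ = 0 := by
      rcases mul_eq_zero.mp hC with h' | h'
      · exact absurd h' (pow_ne_zero _ hpQ)
      · exact h'
    obtain ⟨v, _, hv⟩ := phi_norm haniso _ _ _ hc
    rw [hphiC, norm_zero] at hv
    exact (pow_ne_zero _ (zpow_ne_zero _ hpR0)) hv.symm
  exact ⟨hblockA.1, hblockA.2.1, hblockA.2.2, hblockB.1, hblockB.2.1, hblockB.2.2,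
    hblockC.1, hblockC.2.1, hblockC.2.2⟩

lemma no_line (haniso : ∀ a b c : ZMod p, phi a b c = 0 → a = 0 ∧ b = 0 ∧ c = 0)
    (x y : Fin 11 → ℚ_[p]) (li : LinearIndependent ℚ_[p] ![x, y])
    (hline : ∀ s t : ℚ_[p], eval (s • x + t • y) ((FF p).map (Int.castRingHom ℚ_[p])) = 0) :
    False := by
  have hli := LinearIndependent.pair_iff.mp li
  have hv : ∀ s t : ℚ_[p],
      phi (s * x 0 + t * y 0) (s * x 1 + t * y 1) (s * x 2 + t * y 2)
      + (p : ℚ_[p]) * phi (s * x 3 + t * y 3) (s * x 4 + t * y 4) (s * x 5 + t * y 5)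
      + (p : ℚ_[p]) ^ 2 * phi (s * x 6 + t * y 6) (s * x 7 + t * y 7) (s * x 8 + t * y 8)
      + (s * x 9 + t * y 9) ^ 3 + (s * x 10 + t * y 10) ^ 3 = 0 := by
    intro s t
    have h := hline s t
    rw [eval_FF] at h
    simpa only [Pi.add_apply, Pi.smul_apply, smul_eq_mul] using h
  by_cases hd : x 9 * y 10 - x 10 * y 9 = 0
  · -- degenerate case: some nontrivial combination kills both last coordinates
    obtain ⟨α, β, hαβ, h9, h10⟩ :
        ∃ α β : ℚ_[p], ¬(α = 0 ∧ β = 0) ∧ α * x 9 + β * y 9 = 0 ∧ α * x 10 + β * y 10 = 0 := by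
      by_cases hx9 : x 9 = 0
      · by_cases hx10 : x 10 = 0
        · exact ⟨1, 0, by simp, by simp [hx9], by simp [hx10]⟩
        · refine ⟨-(y 10), x 10, fun hc => hx10 hc.2, ?_, by ring⟩
          linear_combination -hd
      · refine ⟨-(y 9), x 9, fun hc => hx9 hc.2, by ring, ?_⟩
        linear_combination hd
    have hz := hv α β
    rw [h9, h10] at hz
    have hz' : phi (α * x 0 + β * y 0) (α * x 1 + β * y 1) (α * x 2 + β * y 2)
        + (p : ℚ_[p]) * phi (α * x 3 + β * y 3) (α * x 4 + β * y 4) (α * x 5 + β * y 5)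
        + (p : ℚ_[p]) ^ 2 * phi (α * x 6 + β * y 6) (α * x 7 + β * y 7) (α * x 8 + β * y 8)
        = 0 := by linear_combination hz
    obtain ⟨Z0, Z1, Z2, Z3, Z4, Z5, Z6, Z7, Z8⟩ := G_aniso haniso _ _ _ _ _ _ _ _ _ hz'
    apply hαβ
    apply hli α β
    funext i
    fin_cases i
    · exact Z0
    · exact Z1
    · exact Z2
    · exact Z3
    · exact Z4
    · exact Z5
    · exact Z6
    · exact Z7
    · exact Z8
    · exact h9
    · exact h10
  · -- main case: change basis so that the last two coordinates become (1,0) and (0,1)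
    set d := x 9 * y 10 - x 10 * y 9 with hddef
    set s1 : ℚ_[p] := y 10 / d with hs1
    set t1 : ℚ_[p] := -(x 10) / d with ht1
    set s2 : ℚ_[p] := -(y 9) / d with hs2
    set t2 : ℚ_[p] := x 9 / d with ht2
    have u9 : s1 * x 9 + t1 * y 9 = 1 := by
      rw [hs1, ht1]; field_simp; ring
    have u10 : s1 * x 10 + t1 * y 10 = 0 := by
      rw [hs1, ht1]; field_simp; ring
    have w9 : s2 * x 9 + t2 * y 9 = 0 := by
      rw [hs2, ht2]; field_simp; ring
    have w10 : s2 * x 10 + t2 * y 10 = 1 := by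
      rw [hs2, ht2]; field_simp; ring
    -- first point : the "u" vector lies on the hypersurface
    have h1 := hv s1 t1
    rw [u9, u10] at h1
    -- second point : u - w
    have h2 := hv (s1 - s2) (t1 - t2)
    have d9 : (s1 - s2) * x 9 + (t1 - t2) * y 9 = 1 := by linear_combination u9 - w9
    have d10 : (s1 - s2) * x 10 + (t1 - t2) * y 10 = -1 := by linear_combination u10 - w10
    rw [d9, d10] at h2
    have h2' : phi ((s1 - s2) * x 0 + (t1 - t2) * y 0) ((s1 - s2) * x 1 + (t1 - t2) * y 1)
          ((s1 - s2) * x 2 + (t1 - t2) * y 2)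
        + (p : ℚ_[p]) * phi ((s1 - s2) * x 3 + (t1 - t2) * y 3)
          ((s1 - s2) * x 4 + (t1 - t2) * y 4) ((s1 - s2) * x 5 + (t1 - t2) * y 5)
        + (p : ℚ_[p]) ^ 2 * phi ((s1 - s2) * x 6 + (t1 - t2) * y 6)
          ((s1 - s2) * x 7 + (t1 - t2) * y 7) ((s1 - s2) * x 8 + (t1 - t2) * y 8)
        = 0 := by linear_combination h2
    obtain ⟨E0, E1, E2, E3, E4, E5, E6, E7, E8⟩ := G_aniso haniso _ _ _ _ _ _ _ _ _ h2'
    -- third point : u + w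
    have h3 := hv (s1 + s2) (t1 + t2)
    have a9 : (s1 + s2) * x 9 + (t1 + t2) * y 9 = 1 := by linear_combination u9 + w9
    have a10 : (s1 + s2) * x 10 + (t1 + t2) * y 10 = 1 := by linear_combination u10 + w10
    have C0 : (s1 + s2) * x 0 + (t1 + t2) * y 0 = 2 * (s1 * x 0 + t1 * y 0) := by
      linear_combination -E0
    have C1 : (s1 + s2) * x 1 + (t1 + t2) * y 1 = 2 * (s1 * x 1 + t1 * y 1) := by
      linear_combination -E1
    have C2 : (s1 + s2) * x 2 + (t1 + t2) * y 2 = 2 * (s1 * x 2 + t1 * y 2) := by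
      linear_combination -E2
    have C3 : (s1 + s2) * x 3 + (t1 + t2) * y 3 = 2 * (s1 * x 3 + t1 * y 3) := by
      linear_combination -E3
    have C4 : (s1 + s2) * x 4 + (t1 + t2) * y 4 = 2 * (s1 * x 4 + t1 * y 4) := by
      linear_combination -E4
    have C5 : (s1 + s2) * x 5 + (t1 + t2) * y 5 = 2 * (s1 * x 5 + t1 * y 5) := by
      linear_combination -E5
    have C6 : (s1 + s2) * x 6 + (t1 + t2) * y 6 = 2 * (s1 * x 6 + t1 * y 6) := by
      linear_combination -E6
    have C7 : (s1 + s2) * x 7 + (t1 + t2) * y 7 = 2 * (s1 * x 7 + t1 * y 7) := by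
      linear_combination -E7
    have C8 : (s1 + s2) * x 8 + (t1 + t2) * y 8 = 2 * (s1 * x 8 + t1 * y 8) := by
      linear_combination -E8
    rw [a9, a10, C0, C1, C2, C3, C4, C5, C6, C7, C8, phi_mul, phi_mul, phi_mul] at h3
    have h6 : (6 : ℚ_[p]) = 0 := by linear_combination (-1 : ℚ_[p]) * h3 + 8 * h1
    norm_num at h6


lemma aniso2 : ∀ a b c : ZMod 2, phi a b c = 0 → a = 0 ∧ b = 0 ∧ c = 0 := by decide
lemma aniso3 : ∀ a b c : ZMod 3, phi a b c = 0 → a = 0 ∧ b = 0 ∧ c = 0 := by decide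
lemma aniso5 : ∀ a b c : ZMod 5, phi a b c = 0 → a = 0 ∧ b = 0 ∧ c = 0 := by decide

end SmoothCubicNoLine

theorem exists_smooth_cubic_without_padic_line
    (p : ℕ) [Fact p.Prime] (hp : p = 2 ∨ p = 3 ∨ p = 5) :
    ∃ F : MvPolynomial (Fin 11) ℤ, F.IsHomogeneous 3 ∧
      (∀ x : Fin 11 → ℂ,
        (∀ i, eval x (pderiv i (F.map (Int.castRingHom ℂ))) = 0) → x = 0) ∧
      ¬ ∃ x y : Fin 11 → ℚ_[p], LinearIndependent ℚ_[p] ![x, y] ∧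
        ∀ s t : ℚ_[p], eval (s • x + t • y) (F.map (Int.castRingHom ℚ_[p])) = 0 := by
  refine ⟨SmoothCubicNoLine.FF p, SmoothCubicNoLine.FF_isHomogeneous p,
    fun x hx => SmoothCubicNoLine.FF_smooth p
      (Nat.cast_ne_zero.mpr (Fact.out : p.Prime).ne_zero) x hx, ?_⟩
  rintro ⟨x, y, li, hline⟩
  have haniso : ∀ a b c : ZMod p,
      SmoothCubicNoLine.phi a b c = 0 → a = 0 ∧ b = 0 ∧ c = 0 := by
    rcases hp with rfl | rfl | rfl
    · exact SmoothCubicNoLine.aniso2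
    · exact SmoothCubicNoLine.aniso3
    · exact SmoothCubicNoLine.aniso5
  exact SmoothCubicNoLine.no_line haniso x y li hline
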